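/- Let n, m ≥ 1 and let E : ℝ → ℝ^{n×n}, F : ℝ → ℝ^{n×m}, G : ℝ → ℝ^{m×m} be continuous and uniformly bounded, with E(s) and G(s) symmetric for all s, such that the block matrix [[E(s), F(s)],[F(s)ᵀ, G(s)]] is positive semidefinite for all s. For t ∈ ℝ and δ > 0 define W_E(t,δ) := (1/δ)∫_t^{t+δ} E(s) ds, W_F(t,δ) := (1/δ)∫_t^{t+δ} F(s) ds, W_G(t,δ) := (1/δ)∫_t^{t+δ} G(s) ds, and W(t,t+δ) := [[W_E, W_F],[W_Fᵀ, W_G]] ∈ ℝ^{(n+m)×(n+m)}. Suppose there exist δ, μ > 0 such that for all t ≥ 0, W_E(t,δ) ⪰ μ Iₙ and W_G(t,δ) − W_F(t,δ)ᵀ W_E(t,δ)⁻¹ W_F(t,δ) ⪰ μ Iₘ. Then there exists μ* > 0 such that for all t ≥ 0, W(t,t+δ) ⪰ μ* I_{n+m}. -/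

import Mathlib

open Matrix MeasureTheory intervalIntegral

lemma dot_self_nonneg' {k : Type*} [Fintype k] (v : k → ℝ) : 0 ≤ v ⬝ᵥ v :=
  Finset.sum_nonneg fun _ _ => mul_self_nonneg _

lemma dot_self_pos' {k : Type*} [Fintype k] {v : k → ℝ} (hv : v ≠ 0) : 0 < v ⬝ᵥ v := by
  rcases Function.ne_iff.mp hv with ⟨i, hi⟩
  have hi' : v i ≠ 0 := by simpa using hi
  exact Finset.sum_pos' (fun j _ => mul_self_nonneg _)
    ⟨i, Finset.mem_univ i, mul_self_pos.mpr hi'⟩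

lemma cs_dot {k : Type*} [Fintype k] (v w : k → ℝ) : (v ⬝ᵥ w)^2 ≤ (v ⬝ᵥ v) * (w ⬝ᵥ w) := by
  have := Finset.sum_mul_sq_le_sq_mul_sq Finset.univ v w
  simpa [dotProduct, sq] using this

lemma schur_scalar (μ L2 X Y Z W Q : ℝ) (hμ : 0 < μ) (hL2 : 0 ≤ L2)
    (hX : 0 ≤ X) (hY : 0 ≤ Y) (hZ : 0 ≤ Z) (hW : 0 ≤ W)
    (hQ : μ * Z + μ * Y ≤ Q) (hx : X ≤ 2*Z + 2*W) (hw : W ≤ L2 * Y) :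
    μ / (2*(1+2*L2)) * (X + Y) ≤ Q := by
  rw [div_mul_eq_mul_div, div_le_iff₀ (by positivity)]
  nlinarith [mul_nonneg hL2 hZ, mul_nonneg hL2 hY, mul_nonneg hμ.le (mul_nonneg hL2 hZ),
    mul_nonneg hμ.le (mul_nonneg hL2 hY), mul_nonneg hμ.le hY, mul_nonneg hμ.le hZ]

lemma cs_chain (μ a b c M2 Y : ℝ) (hμ : 0 < μ) (ha : 0 ≤ a) (hY : 0 ≤ Y) (hM2 : 0 ≤ M2)
    (hb2 : b^2 ≤ a*c) (hμa : μ*a ≤ b) (hc : c ≤ M2*Y) : a ≤ (M2/μ^2) * Y := by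
  have hb : 0 ≤ b := le_trans (by positivity) hμa
  have hsq : μ^2 * a^2 ≤ b^2 := by
    have := mul_le_mul hμa hμa (by positivity) hb
    nlinarith
  rcases ha.eq_or_lt with h | h
  · rw [← h]; positivity
  · have hc' : μ^2 * a ≤ c := by nlinarith
    rw [div_mul_eq_mul_div, le_div_iff₀ (by positivity)]
    nlinarith

theorem stmt5
    (n m : ℕ) (hn : 1 ≤ n) (hm : 1 ≤ m)
    (E : ℝ → Matrix (Fin n) (Fin n) ℝ)
    (F : ℝ → Matrix (Fin n) (Fin m) ℝ)
    (G : ℝ → Matrix (Fin m) (Fin m) ℝ)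
    (hE_cont : Continuous E) (hF_cont : Continuous F) (hG_cont : Continuous G)
    (hbdd : ∃ K : ℝ, ∀ s : ℝ, (∀ i j, |E s i j| ≤ K) ∧ (∀ i j, |F s i j| ≤ K) ∧
      (∀ i j, |G s i j| ≤ K))
    (hE_sym : ∀ s, (E s)ᵀ = E s) (hG_sym : ∀ s, (G s)ᵀ = G s)
    (hPSD : ∀ s, (Matrix.fromBlocks (E s) (F s) (F s)ᵀ (G s)).PosSemidef)
    (δ μ : ℝ) (hδ : 0 < δ) (hμ : 0 < μ)
    (WE : ℝ → Matrix (Fin n) (Fin n) ℝ)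
    (hWE : ∀ t, WE t = (1 / δ) • (Matrix.of fun i j => ∫ s in t..(t + δ), E s i j))
    (WF : ℝ → Matrix (Fin n) (Fin m) ℝ)
    (hWF : ∀ t, WF t = (1 / δ) • (Matrix.of fun i j => ∫ s in t..(t + δ), F s i j))
    (WG : ℝ → Matrix (Fin m) (Fin m) ℝ)
    (hWG : ∀ t, WG t = (1 / δ) • (Matrix.of fun i j => ∫ s in t..(t + δ), G s i j))
    (hWE_PE : ∀ t : ℝ, 0 ≤ t → (WE t - μ • (1 : Matrix (Fin n) (Fin n) ℝ)).PosSemidef)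
    (hSchur_PE : ∀ t : ℝ, 0 ≤ t →
      (WG t - (WF t)ᵀ * (WE t)⁻¹ * WF t - μ • (1 : Matrix (Fin m) (Fin m) ℝ)).PosSemidef) :
    ∃ μstar : ℝ, 0 < μstar ∧ ∀ t : ℝ, 0 ≤ t →
      (Matrix.fromBlocks (WE t) (WF t) (WF t)ᵀ (WG t)
        - μstar • (1 : Matrix (Fin n ⊕ Fin m) (Fin n ⊕ Fin m) ℝ)).PosSemidef := by
  obtain ⟨K, hK⟩ := hbdd
  set M2 : ℝ := (n*m) * K^2 with hM2def
  have hM2 : 0 ≤ M2 := by positivity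
  set L2 : ℝ := M2 / μ^2 with hL2def
  have hL2 : 0 ≤ L2 := by positivity
  refine ⟨μ / (2*(1+2*L2)), by positivity, fun t ht => ?_⟩
  -- entrywise bound on WF t
  have hWFbd : ∀ i j, |WF t i j| ≤ K := by
    intro i j
    rw [hWF]
    simp only [Matrix.smul_apply, Matrix.of_apply, smul_eq_mul]
    have h1 : |∫ s in t..(t+δ), F s i j| ≤ K * |t + δ - t| := by
      have := intervalIntegral.norm_integral_le_of_norm_le_const
        (a := t) (b := t + δ) (C := K) (f := fun s => F s i j)
        (fun x _ => by simpa [Real.norm_eq_abs] using (hK x).2.1 i j)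
      simpa [Real.norm_eq_abs] using this
    rw [abs_mul, abs_of_pos (by positivity : (0:ℝ) < 1/δ)]
    have h2 : |t + δ - t| = δ := by rw [add_sub_cancel_left, abs_of_pos hδ]
    rw [h2] at h1
    calc 1/δ * |∫ s in t..(t+δ), F s i j| ≤ 1/δ * (K * δ) := by
          apply mul_le_mul_of_nonneg_left h1 (by positivity)
      _ = K := by field_simp
  -- symmetry of averaged blocks
  have hWEs : (WE t)ᵀ = WE t := by
    ext i j
    simp only [hWE, Matrix.transpose_apply, Matrix.smul_apply, Matrix.of_apply]
    congr 1
    apply intervalIntegral.integral_congr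
    intro s _
    exact congrFun (congrFun (hE_sym s) i) j
  have hWGs : (WG t)ᵀ = WG t := by
    ext i j
    simp only [hWG, Matrix.transpose_apply, Matrix.smul_apply, Matrix.of_apply]
    congr 1
    apply intervalIntegral.integral_congr
    intro s _
    exact congrFun (congrFun (hG_sym s) i) j
  set A := WE t with hA
  set B := WF t with hB
  set C := WG t with hC
  set S := C - Bᵀ * A⁻¹ * B with hS
  -- quadratic lower bounds
  have hAq : ∀ v : Fin n → ℝ, μ * (v ⬝ᵥ v) ≤ v ⬝ᵥ A *ᵥ v := by
    intro v
    have h := (hWE_PE t ht).dotProduct_mulVec_nonneg v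
    simp only [Matrix.sub_mulVec, Matrix.smul_mulVec, Matrix.one_mulVec,
      dotProduct_sub, dotProduct_smul, smul_eq_mul, star_trivial, sub_nonneg] at h
    exact h
  have hSq : ∀ v : Fin m → ℝ, μ * (v ⬝ᵥ v) ≤ v ⬝ᵥ S *ᵥ v := by
    intro v
    have h := (hSchur_PE t ht).dotProduct_mulVec_nonneg v
    simp only [Matrix.sub_mulVec, Matrix.smul_mulVec, Matrix.one_mulVec,
      dotProduct_sub, dotProduct_smul, smul_eq_mul, star_trivial, sub_nonneg] at h
    rw [hS, Matrix.sub_mulVec, dotProduct_sub]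
    exact h
  -- A is positive definite, hence invertible
  have hAherm : A.IsHermitian := by
    unfold Matrix.IsHermitian
    rw [Matrix.conjTranspose_eq_transpose_of_trivial, hWEs]
  have hApd : A.PosDef := by
    refine Matrix.PosDef.of_dotProduct_mulVec_pos hAherm fun v hv => ?_
    have h1 := hAq v
    have h2 : 0 < v ⬝ᵥ v := dot_self_pos' hv
    simp only [star_trivial]
    exact lt_of_lt_of_le (by positivity) h1
  have hAdet : IsUnit A.det := (Matrix.isUnit_iff_isUnit_det A).1 hApd.isUnit
  have hAAinv : A * A⁻¹ = 1 := Matrix.mul_nonsing_inv A hAdet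
  have hAinvs : A⁻¹ᵀ = A⁻¹ := by rw [Matrix.transpose_nonsing_inv, hWEs]
  -- Hermitian-ness of the goal matrix
  have hherm : (Matrix.fromBlocks A B Bᵀ C
      - (μ / (2*(1+2*L2))) • (1 : Matrix (Fin n ⊕ Fin m) (Fin n ⊕ Fin m) ℝ)).IsHermitian := by
    apply Matrix.IsHermitian.sub
    · rw [Matrix.isHermitian_fromBlocks_iff]
      refine ⟨hAherm, ?_, ?_, ?_⟩
      · rw [Matrix.conjTranspose_eq_transpose_of_trivial]
      · rw [Matrix.conjTranspose_eq_transpose_of_trivial, Matrix.transpose_transpose]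
      · unfold Matrix.IsHermitian
        rw [Matrix.conjTranspose_eq_transpose_of_trivial, hWGs]
    · rw [Matrix.smul_one_eq_diagonal]
      exact Matrix.isHermitian_diagonal _
  refine Matrix.PosSemidef.of_dotProduct_mulVec_nonneg hherm fun v => ?_
  set x : Fin n → ℝ := v ∘ Sum.inl with hx
  set y : Fin m → ℝ := v ∘ Sum.inr with hy
  have hv : v = Sum.elim x y := by funext i; cases i <;> rfl
  set u : Fin n → ℝ := B *ᵥ y with hu
  set w : Fin n → ℝ := (A⁻¹ * B) *ᵥ y with hw
  set z : Fin n → ℝ := x + w with hz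
  -- key facts about w and u
  have hAw : A *ᵥ w = u := by
    rw [hw, Matrix.mulVec_mulVec, ← Matrix.mul_assoc, hAAinv, Matrix.one_mul]
  have hwAx : ∀ p : Fin n → ℝ, w ⬝ᵥ A *ᵥ p = u ⬝ᵥ p := by
    intro p
    rw [Matrix.dotProduct_mulVec, ← Matrix.mulVec_transpose, hWEs, hAw]
  have hBty : ∀ p : Fin n → ℝ, y ⬝ᵥ Bᵀ *ᵥ p = u ⬝ᵥ p := by
    intro p
    rw [Matrix.dotProduct_mulVec, ← Matrix.mulVec_transpose, Matrix.transpose_transpose, hu]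
  -- the quadratic form identity
  have hSexp : y ⬝ᵥ S *ᵥ y = y ⬝ᵥ C *ᵥ y - u ⬝ᵥ w := by
    rw [hS, Matrix.sub_mulVec, dotProduct_sub]
    congr 1
    have : (Bᵀ * A⁻¹ * B) *ᵥ y = Bᵀ *ᵥ w := by
      rw [hw, Matrix.mulVec_mulVec, Matrix.mul_assoc]
    rw [this, hBty]
  have key : x ⬝ᵥ A *ᵥ x + x ⬝ᵥ B *ᵥ y + (y ⬝ᵥ Bᵀ *ᵥ x + y ⬝ᵥ C *ᵥ y)
      = z ⬝ᵥ A *ᵥ z + y ⬝ᵥ S *ᵥ y := by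
    have e1 : z ⬝ᵥ A *ᵥ z = x ⬝ᵥ A *ᵥ x + x ⬝ᵥ u + (u ⬝ᵥ x + w ⬝ᵥ u) := by
      rw [hz, Matrix.mulVec_add, dotProduct_add, add_dotProduct, add_dotProduct, hAw,
        hwAx x]
      ring
    rw [e1, hSexp, hBty x, hu]
    have : u ⬝ᵥ w = w ⬝ᵥ u := dotProduct_comm _ _
    rw [this]
    have : u ⬝ᵥ x = x ⬝ᵥ u := dotProduct_comm _ _
    rw [this]
    ring
  -- scalar bounds
  have hQ : μ * (z ⬝ᵥ z) + μ * (y ⬝ᵥ y) ≤ z ⬝ᵥ A *ᵥ z + y ⬝ᵥ S *ᵥ y :=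
    add_le_add (hAq z) (hSq y)
  have huu : u ⬝ᵥ u ≤ M2 * (y ⬝ᵥ y) := by
    have hrow : ∀ i, (u i)^2 ≤ (m * K^2) * (y ⬝ᵥ y) := by
      intro i
      have h1 : (u i)^2 ≤ (∑ j, (B i j)^2) * ∑ j, (y j)^2 := by
        have := Finset.sum_mul_sq_le_sq_mul_sq Finset.univ (fun j => B i j) y
        simpa [hu, Matrix.mulVec, dotProduct] using this
      have h2 : (∑ j, (B i j)^2) ≤ m * K^2 := by
        calc (∑ j, (B i j)^2) ≤ ∑ j : Fin m, K^2 := by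
              apply Finset.sum_le_sum
              intro j _
              have := hWFbd i j
              nlinarith [abs_nonneg (B i j), sq_abs (B i j)]
          _ = m * K^2 := by simp [Finset.sum_const, mul_comm]
      have h3 : (∑ j, (y j)^2) = y ⬝ᵥ y := by simp [dotProduct, sq]
      rw [h3] at h1
      exact le_trans h1 (mul_le_mul_of_nonneg_right h2 (dot_self_nonneg' y))
    calc u ⬝ᵥ u = ∑ i, (u i)^2 := by simp [dotProduct, sq]
      _ ≤ ∑ i : Fin n, (m * K^2) * (y ⬝ᵥ y) := Finset.sum_le_sum fun i _ => hrow i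
      _ = n * (m * K^2 * (y ⬝ᵥ y)) := by simp [Finset.sum_const, mul_comm]
      _ = M2 * (y ⬝ᵥ y) := by rw [hM2def]; ring
  have hww : w ⬝ᵥ w ≤ L2 * (y ⬝ᵥ y) := by
    rw [hL2def]
    refine cs_chain μ (w ⬝ᵥ w) (w ⬝ᵥ u) (u ⬝ᵥ u) M2 (y ⬝ᵥ y) hμ (dot_self_nonneg' w)
      (dot_self_nonneg' y) hM2 (cs_dot w u) ?_ huu
    have := hAq w
    rw [hwAx w, dotProduct_comm u w] at this
    exact this
  have hxx : x ⬝ᵥ x ≤ 2 * (z ⬝ᵥ z) + 2 * (w ⬝ᵥ w) := by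
    have hZexp : z ⬝ᵥ z = x ⬝ᵥ x + 2 * (x ⬝ᵥ w) + w ⬝ᵥ w := by
      rw [hz, dotProduct_add, add_dotProduct, add_dotProduct, dotProduct_comm w x]
      ring
    have hpos : 0 ≤ (x + (2:ℝ) • w) ⬝ᵥ (x + (2:ℝ) • w) := dot_self_nonneg' _
    simp only [dotProduct_add, add_dotProduct, smul_dotProduct, dotProduct_smul,
      smul_eq_mul, dotProduct_comm w x] at hpos
    linarith
  -- final assembly
  rw [hv]
  simp only [Matrix.sub_mulVec, Matrix.fromBlocks_mulVec, Matrix.smul_mulVec,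
    Matrix.one_mulVec, dotProduct_sub, dotProduct_smul, smul_eq_mul, star_trivial,
    sumElim_dotProduct_sumElim, dotProduct_add, sub_nonneg,
    Sum.elim_comp_inl, Sum.elim_comp_inr]
  have hfin := schur_scalar μ L2 (x ⬝ᵥ x) (y ⬝ᵥ y) (z ⬝ᵥ z) (w ⬝ᵥ w)
    (z ⬝ᵥ A *ᵥ z + y ⬝ᵥ S *ᵥ y) hμ hL2 (dot_self_nonneg' x) (dot_self_nonneg' y)
    (dot_self_nonneg' z) (dot_self_nonneg' w) hQ hxx hww
  rw [← key] at hfin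
  exact hfin
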